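/- For the softened n-body Hamiltonian H in D spatial dimensions, each component of total angular momentum about the origin, R^{ABS}_{d d'}(q, p) = ∑_{i=1}^n (q_{i,d} p_{i,d'} − q_{i,d'} p_{i,d}) for 1 ≤ d < d' ≤ D, is a conserved quantity: {R^{ABS}_{d d'}, H}(q, p) = 0 for all (q, p) ∈ ℝ^(2nD). -/

import Mathlib

open scoped BigOperators

/-- Partial derivative of `F` with respect to the position coordinate `q_{i,d}`
on the n-body phase space `(Fin N → Fin D → ℝ) × (Fin N → Fin D → ℝ)`. -/
noncomputable def pderivQ {N D : ℕ}
    (F : (Fin N → Fin D → ℝ) × (Fin N → Fin D → ℝ) → ℝ)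
    (x : (Fin N → Fin D → ℝ) × (Fin N → Fin D → ℝ)) (i : Fin N) (d : Fin D) : ℝ :=
  deriv (fun t => F (Function.update x.1 i (Function.update (x.1 i) d t), x.2)) (x.1 i d)

/-- Partial derivative of `F` with respect to the momentum coordinate `p_{i,d}`. -/
noncomputable def pderivP {N D : ℕ}
    (F : (Fin N → Fin D → ℝ) × (Fin N → Fin D → ℝ) → ℝ)
    (x : (Fin N → Fin D → ℝ) × (Fin N → Fin D → ℝ)) (i : Fin N) (d : Fin D) : ℝ :=
  deriv (fun t => F (x.1, Function.update x.2 i (Function.update (x.2 i) d t))) (x.2 i d)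

/-- Poisson bracket on the n-body phase space:
`{F, G}(x) = ∑_{i,d} (∂F/∂q_{i,d} ∂G/∂p_{i,d} − ∂F/∂p_{i,d} ∂G/∂q_{i,d})`. -/
noncomputable def poisson {N D : ℕ}
    (F G : (Fin N → Fin D → ℝ) × (Fin N → Fin D → ℝ) → ℝ)
    (x : (Fin N → Fin D → ℝ) × (Fin N → Fin D → ℝ)) : ℝ :=
  ∑ i, ∑ d, (pderivQ F x i d * pderivP G x i d - pderivP F x i d * pderivQ G x i d)

/-- The softened n-body Hamiltonian in D spatial dimensions:
`H(q, p) = ∑ i ‖p_i‖²/(2 m_i) + ∑_{i ≠ j} G m_i m_j / √(‖q_i − q_j‖² + ε²)`. -/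
noncomputable def nbodyH {N D : ℕ} (m : Fin N → ℝ) (G ε : ℝ)
    (x : (Fin N → Fin D → ℝ) × (Fin N → Fin D → ℝ)) : ℝ :=
  (∑ i, (∑ d, (x.2 i d) ^ 2) / (2 * m i)) +
    ∑ i, ∑ j, if i ≠ j then
      G * m i * m j / Real.sqrt ((∑ d, (x.1 i d - x.1 j d) ^ 2) + ε ^ 2)
    else 0

variable {N D : ℕ}

lemma hasDerivAt_upd (g : Fin N → Fin D → ℝ) (i : Fin N) (e : Fin D) (l : Fin N) (f : Fin D)
    (t0 : ℝ) :
    HasDerivAt (fun t => Function.update g i (Function.update (g i) e t) l f)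
      (if l = i then (if f = e then 1 else 0) else 0) t0 := by
  rcases eq_or_ne l i with rfl | hl
  · rcases eq_or_ne f e with rfl | hf
    · simpa using (hasDerivAt_id' t0)
    · simp only [Function.update_self, Function.update_of_ne hf, if_pos rfl, if_neg hf]
      exact hasDerivAt_const _ _
  · simp only [Function.update_of_ne hl, if_neg hl]
    exact hasDerivAt_const _ _

lemma upd_self (g : Fin N → Fin D → ℝ) (i : Fin N) (e : Fin D) :
    Function.update g i (Function.update (g i) e (g i e)) = g := by simp

noncomputable def uu {N D : ℕ} (ε : ℝ) (q : Fin N → Fin D → ℝ) (k j : Fin N) : ℝ :=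
  (∑ f, (q k f - q j f) ^ 2) + ε ^ 2

lemma uu_pos {ε : ℝ} (hε : 0 < ε) (q : Fin N → Fin D → ℝ) (k j : Fin N) : 0 < uu ε q k j := by
  unfold uu
  have : (0:ℝ) ≤ ∑ f, (q k f - q j f) ^ 2 := Finset.sum_nonneg fun f _ => sq_nonneg _
  positivity

lemma uu_symm (ε : ℝ) (q : Fin N → Fin D → ℝ) (k j : Fin N) : uu ε q k j = uu ε q j k := by
  unfold uu
  congr 1
  exact Finset.sum_congr rfl fun f _ => by ring

lemma sum_antisym {α : Type*} [Fintype α] (F : α → α → ℝ)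
    (h : ∀ i j, F i j = - F j i) : (∑ i, ∑ j, F i j) = 0 := by
  have A : (∑ i, ∑ j, F i j) = ∑ i, ∑ j, - F j i :=
    Finset.sum_congr rfl fun i _ => Finset.sum_congr rfl fun j _ => h i j
  have B : (∑ i : α, ∑ j : α, - F j i) = - ∑ i : α, ∑ j : α, F j i := by simp
  have C : (∑ i : α, ∑ j : α, F j i) = ∑ i, ∑ j, F i j := Finset.sum_comm
  linarith [A, B.symm ▸ A, C]

-- per-pair potential term derivative
lemma hPotTerm (m : Fin N → ℝ) (G ε : ℝ) (hε : 0 < ε) (x1 : Fin N → Fin D → ℝ)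
    (i : Fin N) (e : Fin D) (k j : Fin N) :
    HasDerivAt (fun t => G * m k * m j / Real.sqrt
        ((∑ f, (Function.update x1 i (Function.update (x1 i) e t) k f
          - Function.update x1 i (Function.update (x1 i) e t) j f) ^ 2) + ε ^ 2))
      ((if k = j then 0 else -(G * m k * m j) * (x1 k e - x1 j e) /
          (uu ε x1 k j * Real.sqrt (uu ε x1 k j))) *
        ((if k = i then (1:ℝ) else 0) - (if j = i then 1 else 0))) (x1 i e) := by
  have hx : Function.update x1 i (Function.update (x1 i) e (x1 i e)) = x1 := upd_self x1 i e
  have hupos := uu_pos hε x1 k j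
  have hsq : Real.sqrt (uu ε x1 k j) ≠ 0 := ne_of_gt (Real.sqrt_pos.2 hupos)
  -- derivative of the squared-distance function
  have hS : HasDerivAt (fun t => (∑ f, (Function.update x1 i (Function.update (x1 i) e t) k f
          - Function.update x1 i (Function.update (x1 i) e t) j f) ^ 2) + ε ^ 2)
      (2 * (x1 k e - x1 j e) * ((if k = i then (1:ℝ) else 0) - (if j = i then 1 else 0)))
      (x1 i e) := by
    have h := HasDerivAt.add_const (ε ^ 2)
      (HasDerivAt.fun_sum (u := Finset.univ) (fun f _ =>
        ((hasDerivAt_upd x1 i e k f (x1 i e)).sub (hasDerivAt_upd x1 i e j f (x1 i e))).pow 2))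
    refine h.congr_deriv ?_
    simp only [Pi.sub_apply, hx]
    rw [Finset.sum_eq_single e]
    · simp only [if_pos rfl, pow_one, if_true]
      ring_nf
    · intro f _ hf
      simp [if_neg hf]
    · intro he; exact absurd (Finset.mem_univ e) he
  have hS0 : ((∑ f, (Function.update x1 i (Function.update (x1 i) e (x1 i e)) k f
          - Function.update x1 i (Function.update (x1 i) e (x1 i e)) j f) ^ 2) + ε ^ 2)
        = uu ε x1 k j := by rw [hx]; rfl
  have hsqrt := hS.sqrt (by rw [hS0]; exact ne_of_gt hupos)
  have hdiv := (hasDerivAt_const (x1 i e) (G * m k * m j)).div hsqrt (by rw [hS0]; exact hsq)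
  refine hdiv.congr_deriv ?_
  rw [hS0]
  rcases eq_or_ne k j with rfl | hkj
  · simp [Real.sq_sqrt hupos.le]
  · rw [if_neg hkj]
    rw [Real.sq_sqrt hupos.le]
    field_simp
    ring


lemma pderivP_nbodyH (m : Fin N → ℝ) (hm : ∀ i, 0 < m i) (G ε : ℝ)
    (x : (Fin N → Fin D → ℝ) × (Fin N → Fin D → ℝ)) (i : Fin N) (e : Fin D) :
    pderivP (nbodyH m G ε) x i e = x.2 i e / m i := by
  have hx : Function.update x.2 i (Function.update (x.2 i) e (x.2 i e)) = x.2 := upd_self _ i e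
  unfold pderivP nbodyH
  have h : HasDerivAt
      (fun t => (∑ k, (∑ f, (Function.update x.2 i (Function.update (x.2 i) e t) k f) ^ 2)
          / (2 * m k)) +
        ∑ k, ∑ j, if k ≠ j then
          G * m k * m j / Real.sqrt ((∑ f, (x.1 k f - x.1 j f) ^ 2) + ε ^ 2) else 0)
      (x.2 i e / m i) (x.2 i e) := by
    have h1 := HasDerivAt.fun_sum (u := Finset.univ) (fun k (_ : k ∈ Finset.univ) =>
      HasDerivAt.div_const (HasDerivAt.fun_sum (u := Finset.univ) (fun f (_ : f ∈ Finset.univ) =>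
        (hasDerivAt_upd x.2 i e k f (x.2 i e)).pow 2)) (2 * m k))
    have h2 := h1.add_const (∑ k, ∑ j, if k ≠ j then
          G * m k * m j / Real.sqrt ((∑ f, (x.1 k f - x.1 j f) ^ 2) + ε ^ 2) else 0)
    refine h2.congr_deriv ?_
    simp only [hx, pow_one]
    rw [Finset.sum_eq_single i]
    · rw [Finset.sum_eq_single e]
      · simp only [if_pos rfl, if_true]
        field_simp [ne_of_gt (hm i)]
        ring
      · intro f _ hf; simp [if_neg hf]
      · intro he; exact absurd (Finset.mem_univ e) he
    · intro k _ hk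
      simp [if_neg hk]
    · intro hi; exact absurd (Finset.mem_univ i) hi
  exact h.deriv

lemma pderivQ_nbodyH (m : Fin N → ℝ) (G ε : ℝ) (hε : 0 < ε)
    (x : (Fin N → Fin D → ℝ) × (Fin N → Fin D → ℝ)) (i : Fin N) (e : Fin D) :
    pderivQ (nbodyH m G ε) x i e =
      ∑ k, ∑ j, (if k = j then 0 else -(G * m k * m j) * (x.1 k e - x.1 j e) /
          (uu ε x.1 k j * Real.sqrt (uu ε x.1 k j))) *
        ((if k = i then (1:ℝ) else 0) - (if j = i then 1 else 0)) := by
  unfold pderivQ nbodyH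
  have h : HasDerivAt
      (fun t => (∑ k, (∑ f, (x.2 k f) ^ 2) / (2 * m k)) +
        ∑ k, ∑ j, if k ≠ j then
          G * m k * m j / Real.sqrt
            ((∑ f, (Function.update x.1 i (Function.update (x.1 i) e t) k f
              - Function.update x.1 i (Function.update (x.1 i) e t) j f) ^ 2) + ε ^ 2) else 0)
      (∑ k, ∑ j, (if k = j then 0 else -(G * m k * m j) * (x.1 k e - x.1 j e) /
          (uu ε x.1 k j * Real.sqrt (uu ε x.1 k j))) *
        ((if k = i then (1:ℝ) else 0) - (if j = i then 1 else 0))) (x.1 i e) := by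
    refine HasDerivAt.const_add _ ?_
    refine HasDerivAt.fun_sum fun k _ => ?_
    refine HasDerivAt.fun_sum fun j _ => ?_
    rcases eq_or_ne k j with rfl | hkj
    · simpa using hasDerivAt_const (x.1 i e) (0:ℝ)
    · simpa [hkj] using hPotTerm m G ε hε x.1 i e k j
  exact h.deriv

lemma pderivQ_nbodyH' (m : Fin N → ℝ) (G ε : ℝ) (hε : 0 < ε)
    (x : (Fin N → Fin D → ℝ) × (Fin N → Fin D → ℝ)) (i : Fin N) (e : Fin D) :
    pderivQ (nbodyH m G ε) x i e =
      ∑ j, (if i = j then 0 else -(2 * G * m i * m j) * (x.1 i e - x.1 j e) /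
          (uu ε x.1 i j * Real.sqrt (uu ε x.1 i j))) := by
  rw [pderivQ_nbodyH m G ε hε x i e]
  set g : Fin N → Fin N → ℝ := fun k j => if k = j then 0 else
    -(G * m k * m j) * (x.1 k e - x.1 j e) / (uu ε x.1 k j * Real.sqrt (uu ε x.1 k j)) with hg
  have gantisym : ∀ k j, g k j = - g j k := by
    intro k j
    rcases eq_or_ne k j with rfl | h
    · simp [hg]
    · simp only [hg, if_neg h, if_neg (Ne.symm h)]
      rw [uu_symm ε x.1 j k]
      ring
  calc ∑ k, ∑ j, g k j * ((if k = i then (1:ℝ) else 0) - (if j = i then 1 else 0))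
      = ∑ k, ∑ j, ((if k = i then g k j else 0) - (if j = i then g k j else 0)) := by
        refine Finset.sum_congr rfl fun k _ => Finset.sum_congr rfl fun j _ => ?_
        split_ifs <;> ring
    _ = (∑ j, g i j) - (∑ k, g k i) := by
        simp only [Finset.sum_sub_distrib]
        congr 1
        · rw [Finset.sum_comm]
          simp [Finset.sum_ite_eq']
        · simp [Finset.sum_ite_eq']
    _ = (∑ j, g i j) + (∑ j, g i j) := by
        have h1 : (∑ k, g k i) = - ∑ j, g i j := by
          rw [← Finset.sum_neg_distrib]
          exact Finset.sum_congr rfl fun k _ => gantisym k i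
        rw [h1]; ring
    _ = ∑ j, (if i = j then 0 else -(2 * G * m i * m j) * (x.1 i e - x.1 j e) /
          (uu ε x.1 i j * Real.sqrt (uu ε x.1 i j))) := by
        rw [← Finset.sum_add_distrib]
        refine Finset.sum_congr rfl fun j _ => ?_
        rcases eq_or_ne i j with rfl | h
        · simp [hg]
        · simp only [hg, if_neg h]; ring

lemma pderivQ_R (d d' : Fin D) (x : (Fin N → Fin D → ℝ) × (Fin N → Fin D → ℝ))
    (i : Fin N) (e : Fin D) :
    pderivQ (fun y => ∑ i, (y.1 i d * y.2 i d' - y.1 i d' * y.2 i d)) x i e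
      = (if d = e then x.2 i d' else 0) - (if d' = e then x.2 i d else 0) := by
  unfold pderivQ
  have h : HasDerivAt
      (fun t => ∑ k, (Function.update x.1 i (Function.update (x.1 i) e t) k d * x.2 k d'
        - Function.update x.1 i (Function.update (x.1 i) e t) k d' * x.2 k d))
      ((if d = e then x.2 i d' else 0) - (if d' = e then x.2 i d else 0)) (x.1 i e) := by
    have h1 := HasDerivAt.fun_sum (u := Finset.univ) (fun k (_ : k ∈ Finset.univ) =>
      ((hasDerivAt_upd x.1 i e k d (x.1 i e)).mul_const (x.2 k d')).sub
        ((hasDerivAt_upd x.1 i e k d' (x.1 i e)).mul_const (x.2 k d)))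
    refine h1.congr_deriv ?_
    rw [Finset.sum_eq_single i]
    · simp only [if_pos rfl]
      split_ifs <;> ring
    · intro k _ hk; simp [if_neg hk]
    · intro hi; exact absurd (Finset.mem_univ i) hi
  exact h.deriv

lemma pderivP_R (d d' : Fin D) (x : (Fin N → Fin D → ℝ) × (Fin N → Fin D → ℝ))
    (i : Fin N) (e : Fin D) :
    pderivP (fun y => ∑ i, (y.1 i d * y.2 i d' - y.1 i d' * y.2 i d)) x i e
      = (if d' = e then x.1 i d else 0) - (if d = e then x.1 i d' else 0) := by
  unfold pderivP
  have h : HasDerivAt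
      (fun t => ∑ k, (x.1 k d * Function.update x.2 i (Function.update (x.2 i) e t) k d'
        - x.1 k d' * Function.update x.2 i (Function.update (x.2 i) e t) k d))
      ((if d' = e then x.1 i d else 0) - (if d = e then x.1 i d' else 0)) (x.2 i e) := by
    have h1 := HasDerivAt.fun_sum (u := Finset.univ) (fun k (_ : k ∈ Finset.univ) =>
      (HasDerivAt.const_mul (x.1 k d) (hasDerivAt_upd x.2 i e k d' (x.2 i e))).sub
        (HasDerivAt.const_mul (x.1 k d') (hasDerivAt_upd x.2 i e k d (x.2 i e))))
    refine h1.congr_deriv ?_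
    rw [Finset.sum_eq_single i]
    · simp only [if_pos rfl]
      split_ifs <;> ring
    · intro k _ hk; simp [if_neg hk]
    · intro hi; exact absurd (Finset.mem_univ i) hi
  exact h.deriv

/-- Each component of total angular momentum about the origin,
`R^ABS_{d d'}(q, p) = ∑ i (q_{i,d} p_{i,d'} − q_{i,d'} p_{i,d})` for `d < d'`, is a
conserved quantity of the softened n-body Hamiltonian: `{R^ABS_{d d'}, H} = 0`. -/
theorem total_angular_momentum_conserved {N D : ℕ} (m : Fin N → ℝ)
    (hm : ∀ i, 0 < m i) (G ε : ℝ) (hG : 0 < G) (hε : 0 < ε)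
    (d d' : Fin D) (hdd' : d < d') :
    ∀ x : (Fin N → Fin D → ℝ) × (Fin N → Fin D → ℝ),
      poisson (fun y => ∑ i, (y.1 i d * y.2 i d' - y.1 i d' * y.2 i d))
        (nbodyH m G ε) x = 0 := by
  intro x
  unfold poisson
  simp only [pderivQ_R d d' x, pderivP_R d d' x, pderivP_nbodyH m hm G ε x,
    pderivQ_nbodyH' m G ε hε x]
  have key : (∑ i, ∑ e, (((if d = e then x.2 i d' else 0) - (if d' = e then x.2 i d else 0))
        * (x.2 i e / m i)
      - ((if d' = e then x.1 i d else 0) - (if d = e then x.1 i d' else 0))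
        * ∑ j, (if i = j then 0 else -(2 * G * m i * m j) * (x.1 i e - x.1 j e) /
            (uu ε x.1 i j * Real.sqrt (uu ε x.1 i j)))))
      = ∑ i, ∑ j, (x.1 i d' * (if i = j then 0 else -(2 * G * m i * m j) * (x.1 i d - x.1 j d) /
            (uu ε x.1 i j * Real.sqrt (uu ε x.1 i j)))
        - x.1 i d * (if i = j then 0 else -(2 * G * m i * m j) * (x.1 i d' - x.1 j d') /
            (uu ε x.1 i j * Real.sqrt (uu ε x.1 i j)))) := by
    refine Finset.sum_congr rfl fun i _ => ?_
    simp only [sub_mul, ite_mul, zero_mul, Finset.sum_sub_distrib, Finset.sum_ite_eq,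
      Finset.mem_univ, if_true]
    rw [Finset.mul_sum, Finset.mul_sum]
    have hAB : x.2 i d' * (x.2 i d / m i) - x.2 i d * (x.2 i d' / m i) = 0 := by ring
    rw [hAB]
    ring
  rw [key]
  apply sum_antisym
  intro i j
  rcases eq_or_ne i j with rfl | h
  · simp
  · simp only [if_neg h, if_neg (Ne.symm h)]
    rw [uu_symm ε x.1 j i]
    ring
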